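/- arXiv:1912.09548 — 2 statements merged into one kernel-verified Lean document; each statement's English description precedes it below -/
import Mathlib

section
/- Let c, d be real numbers such that 1, c, d are linearly independent over ℚ, and for m, n, k ∈ ℤ write y(m,n,k) = (m + k·c, n + k·d) ∈ ℝ². For every ε > 0 there exists a natural number M > 0 such that: for all integers m, n, k with ‖y(m,n,k)‖ < ε, there exist integers m', n', k' with |m'| ≤ M, |n'| ≤ M, |k'| ≤ M, (m', n', k') ≠ (0,0,0), and ‖y(m+m', n+n', k+k')‖ < ε. -/
lemma abs_sub_lt_one_of_floor_eq {a b : ℝ} (h : ⌊a⌋ = ⌊b⌋) : |a - b| < 1 := by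
  have h1 := Int.floor_le a
  have h2 := Int.lt_floor_add_one a
  have h3 := Int.floor_le b
  have h4 := Int.lt_floor_add_one b
  have hc : ((⌊a⌋ : ℝ)) = ((⌊b⌋ : ℝ)) := by exact_mod_cast h
  rw [abs_sub_lt_iff]
  constructor <;> linarith

lemma no_rel (c d : ℝ) (hli : LinearIndependent ℚ ![(1:ℝ), c, d]) :
    ∀ p q r : ℤ, (p:ℝ) * c + (q:ℝ) * d = (r:ℝ) → p = 0 ∧ q = 0 := by
  intro p q r h
  rw [Fintype.linearIndependent_iff] at hli
  have := hli ![(-r : ℚ), p, q] ?_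
  · constructor
    · have := this 1; simpa using this
    · have := this 2; simpa using this
  · rw [Fin.sum_univ_three]
    simp only [Matrix.cons_val_zero, Matrix.cons_val_one, Matrix.head_cons, Matrix.cons_val_two,
      Matrix.tail_cons]
    rw [Rat.smul_def, Rat.smul_def, Rat.smul_def]
    push_cast
    linarith

lemma nonzero_vec (c d : ℝ) (hli : LinearIndependent ℚ ![(1:ℝ), c, d])
    (m n k : ℤ) (h1 : (m:ℝ) + k * c = 0) (h2 : (n:ℝ) + k * d = 0) :
    m = 0 ∧ n = 0 ∧ k = 0 := by
  have hk : k = 0 ∧ (0:ℤ) = 0 := by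
    refine (no_rel c d hli k 0 (-m) ?_).imp id (fun _ => rfl)
    push_cast; linarith
  have hk0 : k = 0 := hk.1
  subst hk0
  have hm : m = 0 := by exact_mod_cast (by push_cast at h1 ⊢; linarith : (m:ℝ) = 0)
  have hn : n = 0 := by exact_mod_cast (by push_cast at h2 ⊢; linarith : (n:ℝ) = 0)
  exact ⟨hm, hn, rfl⟩

lemma small_elt (c d : ℝ) (δ : ℝ) (hδ : 0 < δ) :
    ∃ m n k : ℤ, k ≠ 0 ∧ |(m:ℝ) + k * c| < δ ∧ |(n:ℝ) + k * d| < δ := by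
  obtain ⟨N, hN⟩ := exists_nat_gt δ⁻¹
  have hNpos : 0 < (N:ℝ) := lt_trans (inv_pos.2 hδ) hN
  have hN0 : 0 < N := by exact_mod_cast hNpos
  have hinv : 1 / (N:ℝ) < δ := by
    rw [div_lt_iff₀ hNpos]
    calc (1:ℝ) = δ * δ⁻¹ := by field_simp
    _ < δ * N := by exact mul_lt_mul_of_pos_left hN hδ
  -- pigeonhole
  set f : ℕ → ℤ × ℤ := fun j => (⌊Int.fract ((j:ℝ) * c) * N⌋, ⌊Int.fract ((j:ℝ) * d) * N⌋) with hf
  have hmaps : ∀ j ∈ Finset.range (N^2+1), f j ∈ Finset.Ico (0:ℤ) N ×ˢ Finset.Ico (0:ℤ) N := by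
    intro j _
    have key : ∀ x : ℝ, ⌊Int.fract x * N⌋ ∈ Finset.Ico (0:ℤ) N := by
      intro x
      rw [Finset.mem_Ico]
      constructor
      · exact Int.floor_nonneg.2 (mul_nonneg (Int.fract_nonneg x) (le_of_lt hNpos))
      · rw [Int.floor_lt]
        push_cast
        calc Int.fract x * N < 1 * N := by
              exact mul_lt_mul_of_pos_right (Int.fract_lt_one x) hNpos
        _ = N := one_mul _
    exact Finset.mem_product.2 ⟨key _, key _⟩
  have hcard : (Finset.Ico (0:ℤ) N ×ˢ Finset.Ico (0:ℤ) N).card < (Finset.range (N^2+1)).card := by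
    rw [Finset.card_product, Finset.card_range]
    simp [Int.card_Ico]
    nlinarith
  obtain ⟨j₁, hj₁, j₂, hj₂, hne, heq⟩ :=
    Finset.exists_ne_map_eq_of_card_lt_of_maps_to hcard hmaps
  have heq1 : ⌊Int.fract ((j₁:ℝ) * c) * N⌋ = ⌊Int.fract ((j₂:ℝ) * c) * N⌋ := congrArg Prod.fst heq
  have heq2 : ⌊Int.fract ((j₁:ℝ) * d) * N⌋ = ⌊Int.fract ((j₂:ℝ) * d) * N⌋ := congrArg Prod.snd heq
  have key : ∀ x y : ℝ, ⌊Int.fract x * N⌋ = ⌊Int.fract y * N⌋ → |Int.fract x - Int.fract y| < δ := by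
    intro x y h
    have h1 : |Int.fract x * N - Int.fract y * N| < 1 := abs_sub_lt_one_of_floor_eq h
    have h2 : |Int.fract x - Int.fract y| * N < 1 := by
      calc |Int.fract x - Int.fract y| * N = |(Int.fract x - Int.fract y) * N| := by
            rw [abs_mul, abs_of_pos hNpos]
      _ = |Int.fract x * N - Int.fract y * N| := by ring_nf
      _ < 1 := h1
    calc |Int.fract x - Int.fract y| = |Int.fract x - Int.fract y| * N * (1/N) := by
          field_simp
    _ < 1 * (1/N) := by
          exact mul_lt_mul_of_pos_right h2 (by positivity)
    _ = 1/N := one_mul _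
    _ < δ := hinv
  refine ⟨⌊(j₂:ℝ) * c⌋ - ⌊(j₁:ℝ) * c⌋, ⌊(j₂:ℝ) * d⌋ - ⌊(j₁:ℝ) * d⌋, (j₁:ℤ) - (j₂:ℤ), ?_, ?_, ?_⟩
  · intro h
    exact hne (by exact_mod_cast sub_eq_zero.1 h)
  · have := key _ _ heq1
    have e1 : ((⌊(j₂:ℝ) * c⌋ - ⌊(j₁:ℝ) * c⌋ : ℤ) : ℝ) + ((j₁:ℤ) - (j₂:ℤ) : ℤ) * c
        = Int.fract ((j₁:ℝ) * c) - Int.fract ((j₂:ℝ) * c) := by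
      unfold Int.fract
      push_cast
      ring
    rw [e1]
    exact this
  · have := key _ _ heq2
    have e1 : ((⌊(j₂:ℝ) * d⌋ - ⌊(j₁:ℝ) * d⌋ : ℤ) : ℝ) + ((j₁:ℤ) - (j₂:ℤ) : ℤ) * d
        = Int.fract ((j₁:ℝ) * d) - Int.fract ((j₂:ℝ) * d) := by
      unfold Int.fract
      push_cast
      ring
    rw [e1]
    exact this

set_option maxHeartbeats 1000000 in
lemma indep_small (c d : ℝ) (hli : LinearIndependent ℚ ![(1:ℝ), c, d]) (δ : ℝ) (hδ : 0 < δ) :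
    ∃ m₁ n₁ k₁ m₂ n₂ k₂ : ℤ,
      |(m₁:ℝ) + k₁ * c| < δ ∧ |(n₁:ℝ) + k₁ * d| < δ ∧
      |(m₂:ℝ) + k₂ * c| < δ ∧ |(n₂:ℝ) + k₂ * d| < δ ∧
      ((m₁:ℝ) + k₁ * c) * ((n₂:ℝ) + k₂ * d) - ((n₁:ℝ) + k₁ * d) * ((m₂:ℝ) + k₂ * c) ≠ 0 := by
  by_contra Hc
  push_neg at Hc
  -- the fixed small element e = (p, q)
  obtain ⟨m₁, n₁, k₁, hk₁, hpδ, hqδ⟩ := small_elt c d δ hδ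
  set p : ℝ := (m₁:ℝ) + k₁ * c with hp_def
  set q : ℝ := (n₁:ℝ) + k₁ * d with hq_def
  have he : ¬(p = 0 ∧ q = 0) := by
    rintro ⟨h1, h2⟩
    exact hk₁ (nonzero_vec c d hli m₁ n₁ k₁ h1 h2).2.2
  have hρ : 0 < p^2 + q^2 := by
    rcases not_and_or.1 he with h | h
    · have : 0 < p^2 := by positivity
      nlinarith [sq_nonneg q]
    · have : 0 < q^2 := by positivity
      nlinarith [sq_nonneg p]
  have hpq : 0 < |p| + |q| := by
    rcases not_and_or.1 he with h | h
    · have : 0 < |p| := abs_pos.2 h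
      linarith [abs_nonneg q]
    · have : 0 < |q| := abs_pos.2 h
      linarith [abs_nonneg p]
  -- parallelism of all small elements with e
  have Hpar : ∀ m n k : ℤ, |(m:ℝ) + k * c| < δ → |(n:ℝ) + k * d| < δ →
      ((m:ℝ) + k * c) * q - ((n:ℝ) + k * d) * p = 0 := by
    intro m n k h1 h2
    exact Hc m n k m₁ n₁ k₁ h1 h2 hpδ hqδ
  set δ₂ : ℝ := (δ/2) * (p^2 + q^2) / (|p| + |q|) with hδ₂_def
  have hδ₂pos : 0 < δ₂ := by positivity
  -- the small generator e₀ = s • e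
  obtain ⟨m₀, n₀, k₀, hk₀, hu₀, hv₀⟩ := small_elt c d (δ/2) (by linarith)
  set u₀ : ℝ := (m₀:ℝ) + k₀ * c with hu₀_def
  set v₀ : ℝ := (n₀:ℝ) + k₀ * d with hv₀_def
  have hcross0 : u₀ * q - v₀ * p = 0 :=
    Hpar m₀ n₀ k₀ (by linarith) (by linarith)
  set s : ℝ := (u₀ * p + v₀ * q) / (p^2 + q^2) with hs_def
  have hsp : s * p = u₀ := by
    rw [hs_def]
    field_simp
    linear_combination (-q) * hcross0
  have hsq : s * q = v₀ := by
    rw [hs_def]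
    field_simp
    linear_combination p * hcross0
  have hs0 : s ≠ 0 := by
    intro h
    rw [h, zero_mul] at hsp hsq
    exact hk₀ (nonzero_vec c d hli m₀ n₀ k₀ hsp.symm hsq.symm).2.2
  -- the key claim: ψ values near 0 are 0
  have claim : ∀ m n k : ℤ,
      |((m:ℝ) + k * c) * q - ((n:ℝ) + k * d) * p| < δ₂ →
      ((m:ℝ) + k * c) * q - ((n:ℝ) + k * d) * p = 0 := by
    intro m n k hψ
    set u : ℝ := (m:ℝ) + k * c with hu_def
    set v : ℝ := (n:ℝ) + k * d with hv_def
    set ψ : ℝ := u * q - v * p with hψ_def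
    set t : ℝ := (u * p + v * q) / (p^2 + q^2) with ht_def
    set j : ℤ := ⌊t / s⌋ with hj_def
    -- estimates
    have hut : u - t * p = q * ψ / (p^2 + q^2) := by
      rw [ht_def, hψ_def]
      field_simp
      ring
    have hvt : v - t * q = -p * ψ / (p^2 + q^2) := by
      rw [ht_def, hψ_def]
      field_simp
      ring
    have habs_ut : |u - t * p| ≤ δ/2 := by
      rw [hut, abs_div, abs_mul, abs_of_pos hρ]
      rw [div_le_iff₀ hρ]
      have h1 : |q| * |ψ| ≤ (|p| + |q|) * δ₂ := by
        apply mul_le_mul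
        · linarith [abs_nonneg p]
        · exact le_of_lt hψ
        · exact abs_nonneg _
        · linarith [abs_nonneg p, abs_nonneg q]
      have h2 : (|p| + |q|) * δ₂ = δ/2 * (p^2 + q^2) := by
        rw [hδ₂_def]
        field_simp
      linarith
    have habs_vt : |v - t * q| ≤ δ/2 := by
      rw [hvt, abs_div, abs_mul, abs_of_pos hρ]
      rw [div_le_iff₀ hρ]
      have h1 : |(-p)| * |ψ| ≤ (|p| + |q|) * δ₂ := by
        rw [abs_neg]
        apply mul_le_mul
        · linarith [abs_nonneg q]
        · exact le_of_lt hψ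
        · exact abs_nonneg _
        · linarith [abs_nonneg p, abs_nonneg q]
      have h2 : (|p| + |q|) * δ₂ = δ/2 * (p^2 + q^2) := by
        rw [hδ₂_def]
        field_simp
      linarith
    have hjs : |t - (j:ℝ) * s| ≤ |s| := by
      have hfr1 := Int.fract_nonneg (t / s)
      have hfr2 := Int.fract_lt_one (t / s)
      have h1 : t - (j:ℝ) * s = Int.fract (t / s) * s := by
        rw [hj_def, Int.fract]
        field_simp
      rw [h1, abs_mul, abs_of_nonneg hfr1]
      calc Int.fract (t / s) * |s| ≤ 1 * |s| :=
            mul_le_mul_of_nonneg_right (le_of_lt hfr2) (abs_nonneg s)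
      _ = |s| := one_mul _
    have hsp_abs : |s| * |p| < δ / 2 := by
      rw [← abs_mul, hsp]; exact hu₀
    have hsq_abs : |s| * |q| < δ / 2 := by
      rw [← abs_mul, hsq]; exact hv₀
    have hue : ((m - j * m₀ : ℤ) : ℝ) + ((k - j * k₀ : ℤ) : ℝ) * c
        = (u - t * p) + (t - (j:ℝ) * s) * p := by
      push_cast
      linear_combination (-1 : ℝ) * hu_def + (j:ℝ) * hu₀_def + (j:ℝ) * hsp
    have hve : ((n - j * n₀ : ℤ) : ℝ) + ((k - j * k₀ : ℤ) : ℝ) * d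
        = (v - t * q) + (t - (j:ℝ) * s) * q := by
      push_cast
      linear_combination (-1 : ℝ) * hv_def + (j:ℝ) * hv₀_def + (j:ℝ) * hsq
    have hus : |((m - j * m₀ : ℤ) : ℝ) + ((k - j * k₀ : ℤ) : ℝ) * c| < δ := by
      rw [hue]
      calc |(u - t * p) + (t - (j:ℝ) * s) * p| ≤ |u - t * p| + |t - (j:ℝ) * s| * |p| := by
            rw [← abs_mul]; exact abs_add_le _ _
      _ ≤ δ / 2 + |s| * |p| := by
            have := mul_le_mul_of_nonneg_right hjs (abs_nonneg p)
            linarith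
      _ < δ / 2 + δ / 2 := by linarith
      _ = δ := by ring
    have hvs : |((n - j * n₀ : ℤ) : ℝ) + ((k - j * k₀ : ℤ) : ℝ) * d| < δ := by
      rw [hve]
      calc |(v - t * q) + (t - (j:ℝ) * s) * q| ≤ |v - t * q| + |t - (j:ℝ) * s| * |q| := by
            rw [← abs_mul]; exact abs_add_le _ _
      _ ≤ δ / 2 + |s| * |q| := by
            have := mul_le_mul_of_nonneg_right hjs (abs_nonneg q)
            linarith
      _ < δ / 2 + δ / 2 := by linarith
      _ = δ := by ring
    have hpar' := Hpar (m - j * m₀) (n - j * n₀) (k - j * k₀) hus hvs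
    rw [hue, hve] at hpar'
    linear_combination hψ_def + hpar'
  -- the subgroup of cross values
  set A : AddSubgroup ℝ :=
    { carrier := {x : ℝ | ∃ m n k : ℤ, x = (m:ℝ) * q - (n:ℝ) * p + (k:ℝ) * (c * q - d * p)}
      zero_mem' := ⟨0, 0, 0, by push_cast; ring⟩
      add_mem' := by
        rintro x y ⟨ma, na, ka, rfl⟩ ⟨mb, nb, kb, rfl⟩
        exact ⟨ma + mb, na + nb, ka + kb, by push_cast; ring⟩
      neg_mem' := by
        rintro x ⟨ma, na, ka, rfl⟩
        exact ⟨-ma, -na, -ka, by push_cast; ring⟩ } with hA_def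
  have hA_small : ∀ x ∈ A, |x| < δ₂ → x = 0 := by
    rintro x ⟨m, n, k, rfl⟩ hx
    have hid : ((m:ℝ) + k * c) * q - ((n:ℝ) + k * d) * p
        = (m:ℝ) * q - (n:ℝ) * p + (k:ℝ) * (c * q - d * p) := by ring
    rw [← hid] at hx ⊢
    exact claim m n k hx
  rcases AddSubgroup.dense_or_cyclic A with hD | ⟨a, ha⟩
  · obtain ⟨b, hbA, hb⟩ := Metric.mem_closure_iff.1 (hD (δ₂ / 2)) (δ₂ / 2) (by linarith)
    rw [Real.dist_eq] at hb
    have hb1 : |b| < δ₂ := by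
      rw [abs_sub_lt_iff] at hb
      rw [abs_lt]
      constructor <;> linarith
    have hb2 : b ≠ 0 := by
      intro h
      rw [h, sub_zero] at hb
      rw [abs_of_pos (by linarith : (0:ℝ) < δ₂ / 2)] at hb
      linarith
    exact hb2 (hA_small b hbA hb1)
  · have hqA : q ∈ A := ⟨1, 0, 0, by push_cast; ring⟩
    have hpA : -p ∈ A := ⟨0, 1, 0, by push_cast; ring⟩
    have hrA : c * q - d * p ∈ A := ⟨0, 0, 1, by push_cast; ring⟩
    rw [ha, AddSubgroup.mem_closure_singleton] at hqA hpA hrA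
    obtain ⟨P, hP⟩ := hqA
    obtain ⟨Q, hQ⟩ := hpA
    obtain ⟨R, hR⟩ := hrA
    rw [zsmul_eq_mul] at hP hQ hR
    rcases eq_or_ne a 0 with ha0 | ha0
    · rw [ha0, mul_zero] at hP hQ
      exact he ⟨by linarith, hP.symm⟩
    · have hrel : (P:ℝ) * c + (Q:ℝ) * d = (R:ℝ) := by
        have h1 : ((P:ℝ) * c + (Q:ℝ) * d) * a = (R:ℝ) * a := by
          linear_combination c * hP + d * hQ - hR
        exact mul_right_cancel₀ ha0 h1
      obtain ⟨hP0, hQ0⟩ := no_rel c d hli P Q R hrel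
      rw [hP0] at hP
      rw [hQ0] at hQ
      push_cast at hP hQ
      rw [zero_mul] at hP hQ
      exact he ⟨by linarith, hP.symm⟩


lemma nrm_eq (a b : ℝ) : ‖(WithLp.equiv 2 (ℝ × ℝ)).symm (a, b)‖ = Real.sqrt (a^2 + b^2) := by
  rw [WithLp.prod_norm_eq_of_L2]
  simp [Real.norm_eq_abs, sq_abs]

lemma nrm_le (a b : ℝ) : Real.sqrt (a^2 + b^2) ≤ |a| + |b| := by
  rw [show a^2 + b^2 = |a|^2 + |b|^2 by rw [sq_abs, sq_abs]]
  calc Real.sqrt (|a|^2 + |b|^2) ≤ Real.sqrt ((|a| + |b|)^2) := by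
        apply Real.sqrt_le_sqrt
        nlinarith [abs_nonneg a, abs_nonneg b]
  _ = |a| + |b| := Real.sqrt_sq (by positivity)

lemma fst_le_nrm (a b : ℝ) : |a| ≤ Real.sqrt (a^2 + b^2) := by
  rw [← Real.sqrt_sq_eq_abs]
  exact Real.sqrt_le_sqrt (by nlinarith [sq_nonneg b])

lemma snd_le_nrm (a b : ℝ) : |b| ≤ Real.sqrt (a^2 + b^2) := by
  rw [← Real.sqrt_sq_eq_abs]
  exact Real.sqrt_le_sqrt (by nlinarith [sq_nonneg a])

set_option maxHeartbeats 1000000 in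
/-- Bounded-step recurrence for the dense subgroup
`Y = { (m + k·c, n + k·d) }` of `ℝ²` (Euclidean norm): for every `ε > 0` there is
`M > 0` such that any lattice point of the subgroup in the ε-ball can be moved to
another one by a nonzero step of size at most `M` in the integer coordinates. -/
theorem kronecker_lattice_recurrence
    (c d : ℝ) (hli : LinearIndependent ℚ ![(1 : ℝ), c, d])
    (y : ℤ → ℤ → ℤ → WithLp 2 (ℝ × ℝ))
    (hy : ∀ m n k : ℤ, y m n k = (WithLp.equiv 2 (ℝ × ℝ)).symm ((m : ℝ) + (k : ℝ) * c, (n : ℝ) + (k : ℝ) * d)) :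
    ∀ ε : ℝ, 0 < ε →
      ∃ M : ℕ, 0 < M ∧
        ∀ m n k : ℤ, ‖y m n k‖ < ε →
          ∃ m' n' k' : ℤ, |m'| ≤ M ∧ |n'| ≤ M ∧ |k'| ≤ M ∧
            (m', n', k') ≠ (0, 0, 0) ∧
            ‖y (m + m') (n + n') (k + k')‖ < ε := by
  intro ε hε
  obtain ⟨m₁, n₁, k₁, m₂, n₂, k₂, h1, h2, h3, h4, hΔ⟩ :=
    indep_small c d hli (ε/8) (by linarith)
  set p₁ : ℝ := (m₁:ℝ) + k₁ * c with hp₁_def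
  set q₁ : ℝ := (n₁:ℝ) + k₁ * d with hq₁_def
  set p₂ : ℝ := (m₂:ℝ) + k₂ * c with hp₂_def
  set q₂ : ℝ := (n₂:ℝ) + k₂ * d with hq₂_def
  -- hΔ : p₁ * q₂ - q₁ * p₂ ≠ 0
  have habsΔ : 0 < |p₁ * q₂ - q₁ * p₂| := abs_pos.2 hΔ
  clear_value p₁ q₁ p₂ q₂
  set B : ℝ := ((|p₁| + |q₁| + |p₂| + |q₂|) * ε) / |p₁ * q₂ - q₁ * p₂| with hB_def
  have hB0 : 0 ≤ B := by positivity
  set Sm : ℝ := |(m₁:ℝ)| + |(n₁:ℝ)| + |(k₁:ℝ)| + |(m₂:ℝ)| + |(n₂:ℝ)| + |(k₂:ℝ)| with hSm_def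
  have hSm0 : 0 ≤ Sm := by positivity
  clear_value B Sm
  refine ⟨⌈(B + 1) * Sm⌉₊ + 1, Nat.succ_pos _, ?_⟩
  intro m n k hnorm
  rw [hy m n k, nrm_eq] at hnorm
  set X : ℝ := (m:ℝ) + k * c with hX_def
  set Y : ℝ := (n:ℝ) + k * d with hY_def
  have hX : |X| < ε := lt_of_le_of_lt (fst_le_nrm X Y) hnorm
  have hY : |Y| < ε := lt_of_le_of_lt (snd_le_nrm X Y) hnorm
  clear_value X Y
  set α : ℝ := (-X * q₂ + Y * p₂) / (p₁ * q₂ - q₁ * p₂) with hα_def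
  set β : ℝ := (X * q₁ - Y * p₁) / (p₁ * q₂ - q₁ * p₂) with hβ_def
  clear_value α β
  have hαp : α * p₁ + β * p₂ = -X := by
    rw [hα_def, hβ_def]
    rw [div_mul_eq_mul_div, div_mul_eq_mul_div, ← add_div, div_eq_iff hΔ]
    ring
  have hβq : α * q₁ + β * q₂ = -Y := by
    rw [hα_def, hβ_def]
    rw [div_mul_eq_mul_div, div_mul_eq_mul_div, ← add_div, div_eq_iff hΔ]
    ring
  have hnum1 : |(-X * q₂ + Y * p₂)| ≤ (|p₁| + |q₁| + |p₂| + |q₂|) * ε := by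
    have e : |(-X * q₂ + Y * p₂)| ≤ |X| * |q₂| + |Y| * |p₂| := by
      calc |(-X * q₂ + Y * p₂)| ≤ |(-X * q₂)| + |Y * p₂| := abs_add_le _ _
      _ = |X| * |q₂| + |Y| * |p₂| := by rw [abs_mul, abs_mul, abs_neg]
    nlinarith [mul_le_mul_of_nonneg_right hX.le (abs_nonneg q₂),
      mul_le_mul_of_nonneg_right hY.le (abs_nonneg p₂),
      mul_nonneg (abs_nonneg p₁) hε.le, mul_nonneg (abs_nonneg q₁) hε.le]
  have hnum2 : |(X * q₁ - Y * p₁)| ≤ (|p₁| + |q₁| + |p₂| + |q₂|) * ε := by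
    have e : |(X * q₁ - Y * p₁)| ≤ |X| * |q₁| + |Y| * |p₁| := by
      calc |(X * q₁ - Y * p₁)| ≤ |X * q₁| + |(-(Y * p₁))| := by
            rw [sub_eq_add_neg]; exact abs_add_le _ _
      _ = |X| * |q₁| + |Y| * |p₁| := by rw [abs_neg, abs_mul, abs_mul]
    nlinarith [mul_le_mul_of_nonneg_right hX.le (abs_nonneg q₁),
      mul_le_mul_of_nonneg_right hY.le (abs_nonneg p₁),
      mul_nonneg (abs_nonneg p₂) hε.le, mul_nonneg (abs_nonneg q₂) hε.le]
  have habsα : |α| ≤ B := by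
    rw [hα_def, hB_def, abs_div]
    exact (div_le_div_iff_of_pos_right habsΔ).2 hnum1
  have habsβ : |β| ≤ B := by
    rw [hβ_def, hB_def, abs_div]
    exact (div_le_div_iff_of_pos_right habsΔ).2 hnum2
  set s : ℤ := round α with hs_def
  set t : ℤ := round β with ht_def
  clear_value s t
  have hsα : |(s:ℝ) - α| ≤ 1/2 := by rw [hs_def, abs_sub_comm]; exact abs_sub_round α
  have htβ : |(t:ℝ) - β| ≤ 1/2 := by rw [ht_def, abs_sub_comm]; exact abs_sub_round β
  have hgen1 : |X + (s:ℝ) * p₁ + (t:ℝ) * p₂| ≤ ε/8 := by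
    have hid : X + (s:ℝ) * p₁ + (t:ℝ) * p₂ = ((s:ℝ) - α) * p₁ + ((t:ℝ) - β) * p₂ := by
      linear_combination hαp
    rw [hid]
    have h₁ : |p₁| ≤ ε/8 := h1.le
    have h₂ : |p₂| ≤ ε/8 := h3.le
    calc |((s:ℝ) - α) * p₁ + ((t:ℝ) - β) * p₂|
        ≤ |(s:ℝ) - α| * |p₁| + |(t:ℝ) - β| * |p₂| := by
          calc _ ≤ |((s:ℝ) - α) * p₁| + |((t:ℝ) - β) * p₂| := abs_add_le _ _
          _ = _ := by rw [abs_mul, abs_mul]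
    _ ≤ (1/2) * (ε/8) + (1/2) * (ε/8) := by
          apply add_le_add <;>
          · apply mul_le_mul <;> first
              | assumption
              | exact abs_nonneg _
              | positivity
    _ ≤ ε/8 := by linarith
  have hgen2 : |Y + (s:ℝ) * q₁ + (t:ℝ) * q₂| ≤ ε/8 := by
    have hid : Y + (s:ℝ) * q₁ + (t:ℝ) * q₂ = ((s:ℝ) - α) * q₁ + ((t:ℝ) - β) * q₂ := by
      linear_combination hβq
    rw [hid]
    have h₁ : |q₁| ≤ ε/8 := h2.le
    have h₂ : |q₂| ≤ ε/8 := h4.le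
    calc |((s:ℝ) - α) * q₁ + ((t:ℝ) - β) * q₂|
        ≤ |(s:ℝ) - α| * |q₁| + |(t:ℝ) - β| * |q₂| := by
          calc _ ≤ |((s:ℝ) - α) * q₁| + |((t:ℝ) - β) * q₂| := abs_add_le _ _
          _ = _ := by rw [abs_mul, abs_mul]
    _ ≤ (1/2) * (ε/8) + (1/2) * (ε/8) := by
          apply add_le_add <;>
          · apply mul_le_mul <;> first
              | assumption
              | exact abs_nonneg _
              | positivity
    _ ≤ ε/8 := by linarith
  -- choose the step coefficients, guaranteed nonzero
  obtain ⟨S, T, hST, hSb, hTb, hc1, hc2⟩ :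
      ∃ S T : ℤ, ¬(S = 0 ∧ T = 0) ∧ |(S:ℝ)| ≤ B + 1 ∧ |(T:ℝ)| ≤ B + 1 ∧
        |X + (S:ℝ) * p₁ + (T:ℝ) * p₂| ≤ ε/4 ∧ |Y + (S:ℝ) * q₁ + (T:ℝ) * q₂| ≤ ε/4 := by
    by_cases hc : s = 0 ∧ t = 0
    · refine ⟨1, 0, by simp, by simp; linarith, by simp; linarith, ?_, ?_⟩
      · have e : X + ((1:ℤ):ℝ) * p₁ + ((0:ℤ):ℝ) * p₂
            = (X + (s:ℝ) * p₁ + (t:ℝ) * p₂) + p₁ := by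
          rw [hc.1, hc.2]; push_cast; ring
        rw [e]
        calc |(X + (s:ℝ) * p₁ + (t:ℝ) * p₂) + p₁|
            ≤ |X + (s:ℝ) * p₁ + (t:ℝ) * p₂| + |p₁| := abs_add_le _ _
        _ ≤ ε/8 + ε/8 := add_le_add hgen1 h1.le
        _ ≤ ε/4 := by linarith
      · have e : Y + ((1:ℤ):ℝ) * q₁ + ((0:ℤ):ℝ) * q₂
            = (Y + (s:ℝ) * q₁ + (t:ℝ) * q₂) + q₁ := by
          rw [hc.1, hc.2]; push_cast; ring
        rw [e]
        calc |(Y + (s:ℝ) * q₁ + (t:ℝ) * q₂) + q₁|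
            ≤ |Y + (s:ℝ) * q₁ + (t:ℝ) * q₂| + |q₁| := abs_add_le _ _
        _ ≤ ε/8 + ε/8 := add_le_add hgen2 h2.le
        _ ≤ ε/4 := by linarith
    · refine ⟨s, t, hc, ?_, ?_, le_trans hgen1 (by linarith), le_trans hgen2 (by linarith)⟩
      · calc |(s:ℝ)| ≤ |(s:ℝ) - α| + |α| := by
              have := abs_add_le ((s:ℝ) - α) α; simpa using this
        _ ≤ 1/2 + B := add_le_add hsα habsα
        _ ≤ B + 1 := by linarith
      · calc |(t:ℝ)| ≤ |(t:ℝ) - β| + |β| := by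
              have := abs_add_le ((t:ℝ) - β) β; simpa using this
        _ ≤ 1/2 + B := add_le_add htβ habsβ
        _ ≤ B + 1 := by linarith
  have hkey : ∀ a b : ℤ, (|(a:ℝ)| + |(b:ℝ)| ≤ Sm) →
      |S * a + T * b| ≤ ((⌈(B + 1) * Sm⌉₊ + 1 : ℕ) : ℤ) := by
    intro a b hab
    have hr : |((S * a + T * b : ℤ) : ℝ)| ≤ (B + 1) * Sm := by
      push_cast
      calc |(S:ℝ) * a + (T:ℝ) * b| ≤ |(S:ℝ)| * |(a:ℝ)| + |(T:ℝ)| * |(b:ℝ)| := by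
            calc _ ≤ |(S:ℝ) * a| + |(T:ℝ) * b| := abs_add_le _ _
            _ = _ := by rw [abs_mul, abs_mul]
      _ ≤ (B + 1) * |(a:ℝ)| + (B + 1) * |(b:ℝ)| := by
            apply add_le_add <;> apply mul_le_mul_of_nonneg_right <;>
              first | assumption | exact abs_nonneg _
      _ = (B + 1) * (|(a:ℝ)| + |(b:ℝ)|) := by ring
      _ ≤ (B + 1) * Sm := mul_le_mul_of_nonneg_left hab (by linarith)
    have h2 : ((B + 1) * Sm) ≤ ((⌈(B + 1) * Sm⌉₊ + 1 : ℕ) : ℝ) := by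
      push_cast
      linarith [Nat.le_ceil ((B + 1) * Sm)]
    exact_mod_cast hr.trans h2
  have habs_list := fun (x : ℝ) => abs_nonneg x
  refine ⟨S * m₁ + T * m₂, S * n₁ + T * n₂, S * k₁ + T * k₂, ?_, ?_, ?_, ?_, ?_⟩
  -- three bounds
  · refine hkey m₁ m₂ ?_
    rw [hSm_def]
    have a1 := abs_nonneg ((n₁:ℝ)); have a2 := abs_nonneg ((k₁:ℝ))
    have a3 := abs_nonneg ((n₂:ℝ)); have a4 := abs_nonneg ((k₂:ℝ))
    linarith
  · refine hkey n₁ n₂ ?_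
    rw [hSm_def]
    have a1 := abs_nonneg ((m₁:ℝ)); have a2 := abs_nonneg ((k₁:ℝ))
    have a3 := abs_nonneg ((m₂:ℝ)); have a4 := abs_nonneg ((k₂:ℝ))
    linarith
  · refine hkey k₁ k₂ ?_
    rw [hSm_def]
    have a1 := abs_nonneg ((m₁:ℝ)); have a2 := abs_nonneg ((n₁:ℝ))
    have a3 := abs_nonneg ((m₂:ℝ)); have a4 := abs_nonneg ((n₂:ℝ))
    linarith
  -- nonzero
  · intro h
    rw [Prod.ext_iff] at h
    obtain ⟨hm0, h'⟩ := h
    rw [Prod.ext_iff] at h'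
    obtain ⟨hn0, hk0⟩ := h'
    simp only at hm0 hn0 hk0
    have e1 : (S:ℝ) * m₁ + (T:ℝ) * m₂ = 0 := by exact_mod_cast congrArg (Int.cast : ℤ → ℝ) hm0
    have e2 : (S:ℝ) * n₁ + (T:ℝ) * n₂ = 0 := by exact_mod_cast congrArg (Int.cast : ℤ → ℝ) hn0
    have e3 : (S:ℝ) * k₁ + (T:ℝ) * k₂ = 0 := by exact_mod_cast congrArg (Int.cast : ℤ → ℝ) hk0
    have hP : (S:ℝ) * p₁ + (T:ℝ) * p₂ = 0 := by
      linear_combination (S:ℝ) * hp₁_def + (T:ℝ) * hp₂_def + e1 + c * e3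
    have hQ : (S:ℝ) * q₁ + (T:ℝ) * q₂ = 0 := by
      linear_combination (S:ℝ) * hq₁_def + (T:ℝ) * hq₂_def + e2 + d * e3
    have hS0 : S = 0 := by
      have h0 : (S:ℝ) * (p₁ * q₂ - q₁ * p₂) = 0 := by
        linear_combination q₂ * hP - p₂ * hQ
      rcases mul_eq_zero.1 h0 with h' | h'
      · exact_mod_cast h'
      · exact absurd h' hΔ
    have hT0 : T = 0 := by
      have h0 : (T:ℝ) * (p₁ * q₂ - q₁ * p₂) = 0 := by
        linear_combination p₁ * hQ - q₁ * hP
      rcases mul_eq_zero.1 h0 with h' | h'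
      · exact_mod_cast h'
      · exact absurd h' hΔ
    exact hST ⟨hS0, hT0⟩
  -- final norm bound
  · rw [hy, nrm_eq]
    have e1 : ((m + (S * m₁ + T * m₂) : ℤ) : ℝ) + ((k + (S * k₁ + T * k₂) : ℤ) : ℝ) * c
        = X + (S:ℝ) * p₁ + (T:ℝ) * p₂ := by
      push_cast
      linear_combination -hX_def - (S:ℝ) * hp₁_def - (T:ℝ) * hp₂_def
    have e2 : ((n + (S * n₁ + T * n₂) : ℤ) : ℝ) + ((k + (S * k₁ + T * k₂) : ℤ) : ℝ) * d
        = Y + (S:ℝ) * q₁ + (T:ℝ) * q₂ := by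
      push_cast
      linear_combination -hY_def - (S:ℝ) * hq₁_def - (T:ℝ) * hq₂_def
    rw [e1, e2]
    calc Real.sqrt ((X + (S:ℝ) * p₁ + (T:ℝ) * p₂)^2 + (Y + (S:ℝ) * q₁ + (T:ℝ) * q₂)^2)
        ≤ |X + (S:ℝ) * p₁ + (T:ℝ) * p₂| + |Y + (S:ℝ) * q₁ + (T:ℝ) * q₂| := nrm_le _ _
    _ ≤ ε/4 + ε/4 := add_le_add hc1 hc2
    _ < ε := by linarith
end

section
/- Let X ⊆ ℂ be a Lebesgue-measurable set. Suppose there exist constants λ > 1, ρ > 0, C̃ > 0, an integer M ≥ 1, and ε₀ > 0 such that for every ε ∈ (0, ε₀) there are a natural number m₀ with λ^{−m₀} ≥ C̃·ε and points c_j ∈ ℂ (j ∈ ℕ) for which the open balls B(c_j, ρ·λ^{−(m₀ + jM)}) (j ∈ ℕ) are pairwise disjoint and each is contained in X ∩ B(0, ε). Then liminf_{ε→0} m(X ∩ B(0,ε)) / m(B(0,ε)) > 0, where m denotes Lebesgue measure on ℂ ≅ ℝ². -/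
open MeasureTheory Filter
open scoped ENNReal NNReal

/-- If a measurable set `X ⊆ ℂ` contains, at every small scale `ε`,
a family of pairwise disjoint balls `B(c_j, ρ·λ^{−(m₀+jM)})` inside `X ∩ B(0,ε)`
with `λ^{−m₀} ≥ C̃·ε`, then `X` has positive inferior density at `0`. -/
theorem positive_inferior_density_of_disjoint_balls
    (X : Set ℂ) (hX : MeasurableSet X)
    (lam ρ Ctil : ℝ) (hlam : 1 < lam) (hρ : 0 < ρ) (hCtil : 0 < Ctil)
    (M : ℕ) (hM : 1 ≤ M) (ε₀ : ℝ) (hε₀ : 0 < ε₀)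
    (h : ∀ ε : ℝ, 0 < ε → ε < ε₀ →
      ∃ m₀ : ℕ, Ctil * ε ≤ lam ^ (-(m₀ : ℤ)) ∧
        ∃ c : ℕ → ℂ,
          (Pairwise (Function.onFun Disjoint
            (fun j : ℕ => Metric.ball (c j) (ρ * lam ^ (-((m₀ + j * M : ℕ) : ℤ)))))) ∧
          (∀ j : ℕ, Metric.ball (c j) (ρ * lam ^ (-((m₀ + j * M : ℕ) : ℤ))) ⊆
            X ∩ Metric.ball (0 : ℂ) ε)) :
    0 < Filter.liminf
      (fun ε : ℝ =>
        volume (X ∩ Metric.ball (0 : ℂ) ε) / volume (Metric.ball (0 : ℂ) ε))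
      (nhdsWithin 0 (Set.Ioi 0)) := by
  set K : ℝ≥0∞ := ENNReal.ofReal ((ρ * Ctil) ^ 2) with hK
  have hKpos : 0 < K := by
    rw [hK]
    exact ENNReal.ofReal_pos.2 (by positivity)
  have hev : ∀ᶠ ε in nhdsWithin (0 : ℝ) (Set.Ioi 0),
      K ≤ volume (X ∩ Metric.ball (0 : ℂ) ε) / volume (Metric.ball (0 : ℂ) ε) := by
    filter_upwards [Ioo_mem_nhdsGT_of_mem (by exact ⟨le_refl (0:ℝ), hε₀⟩)] with ε hε
    obtain ⟨hε1, hε2⟩ := hε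
    obtain ⟨m₀, hm, c, hdisj, hsub⟩ := h ε hε1 hε2
    have hr : (0:ℝ) < ρ * lam ^ (-(m₀ : ℤ)) := by positivity
    have hsub0 := hsub 0
    simp only [Nat.zero_mul, Nat.add_zero] at hsub0
    have hvol : volume (Metric.ball (c 0) (ρ * lam ^ (-(m₀ : ℤ)))) ≤
        volume (X ∩ Metric.ball (0 : ℂ) ε) := measure_mono hsub0
    rw [Complex.volume_ball] at hvol
    have hBε : volume (Metric.ball (0 : ℂ) ε) = ENNReal.ofReal ε ^ 2 * NNReal.pi :=
      Complex.volume_ball 0 ε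
    have hne : volume (Metric.ball (0 : ℂ) ε) ≠ 0 := by
      rw [hBε]
      refine mul_ne_zero (pow_ne_zero _ ?_) ?_
      · exact (ENNReal.ofReal_pos.2 hε1).ne'
      · simp [NNReal.pi_ne_zero]
    have hfin : volume (Metric.ball (0 : ℂ) ε) ≠ ∞ := by
      rw [hBε]; exact ENNReal.mul_ne_top (by simp [ENNReal.ofReal_ne_top]) (by simp)
    rw [ENNReal.le_div_iff_mul_le (Or.inl hne) (Or.inl hfin)]
    calc K * volume (Metric.ball (0 : ℂ) ε)
        = ENNReal.ofReal ((ρ * Ctil) ^ 2) * (ENNReal.ofReal ε ^ 2 * NNReal.pi) := by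
          rw [hK, hBε]
      _ = (ENNReal.ofReal ((ρ * Ctil) ^ 2) * ENNReal.ofReal ε ^ 2) * NNReal.pi := by ring
      _ = ENNReal.ofReal ((ρ * (Ctil * ε)) ^ 2) * NNReal.pi := by
          rw [← ENNReal.ofReal_pow hε1.le, ← ENNReal.ofReal_mul (by positivity)]
          ring_nf
      _ ≤ ENNReal.ofReal (ρ * lam ^ (-(m₀ : ℤ))) ^ 2 * NNReal.pi := by
          gcongr
          rw [← ENNReal.ofReal_pow hr.le]
          refine ENNReal.ofReal_le_ofReal ?_
          have h1 : 0 ≤ ρ * (Ctil * ε) := by positivity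
          gcongr
      _ ≤ volume (X ∩ Metric.ball (0 : ℂ) ε) := hvol
  calc (0:ℝ≥0∞) < K := hKpos
    _ ≤ _ := le_liminf_of_le (by isBoundedDefault) hev
end
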